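/- With K = F((X)), O = F[[X]], q = |F|, α(z) := X⁻¹z and β as in the previous statement: for odd n = 2ℓ+1, α^n(O) ∩ β^n(O) = Σ_{k=0}^{ℓ} F·X^{-(2k+1)} + O, and hence [α^n(O) : α^n(O) ∩ β^n(O)] = q^ℓ. -/

import Mathlib

open scoped Classical

noncomputable section

variable (F : Type*) [Field F]

/-- The part of a Laurent series supported on `{k | P k}`. -/
def lpart (P : ℤ → Prop) (z : LaurentSeries F) : LaurentSeries F :=
  { coeff := fun k => if P k then z.coeff k else 0,
    isPWO_support' := z.isPWO_support'.mono (fun k hk => by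
      by_cases h : P k <;> simp_all [Function.mem_support]) }

variable {F}

lemma lpart_add (P : ℤ → Prop) (a b : LaurentSeries F) :
    lpart F P (a + b) = lpart F P a + lpart F P b := by
  ext k
  simp only [lpart, HahnSeries.coeff_add]
  split <;> simp

variable (F)

/-- The variable `X` of the Laurent series field `K = F((X))`. -/
def lX : LaurentSeries F := HahnSeries.single 1 1

/-- The ring of formal power series `O = F[[X]]` as an additive subgroup of
`K = F((X))`. -/
def lO : AddSubgroup (LaurentSeries F) where
  carrier := {z | ∀ k < 0, z.coeff k = 0}
  zero_mem' := by intro k _; simp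
  add_mem' := by intro a b ha hb k hk; simp [ha k hk, hb k hk]
  neg_mem' := by intro a ha k hk; simp [ha k hk]


/-- `z⁽⁴⁾ := Σ_{k≥0} a_k X^k`, the part of degree `≥ 0`. -/
def part4 (z : LaurentSeries F) : LaurentSeries F := lpart F (fun k => 0 ≤ k) z

/-- `z⁽⁵⁾ := Σ_{k≥0} a_{-(2k+1)} X^{-(2k+1)}`, the negative odd-degree part. -/
def part5 (z : LaurentSeries F) : LaurentSeries F :=
  lpart F (fun k => k < 0 ∧ Odd k) z

/-- `z⁽⁶⁾ := Σ_{k≥1} a_{-2k} X^{-2k}`, the negative even-degree part. -/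
def part6 (z : LaurentSeries F) : LaurentSeries F :=
  lpart F (fun k => k < 0 ∧ Even k) z

/-- The additive endomorphism `β(z) := X⁻¹z⁽⁴⁾ + X⁻²z⁽⁵⁾ + z⁽⁶⁾` of `K`. -/
def betaK : AddMonoid.End (LaurentSeries F) :=
  AddMonoidHom.mk'
    (fun z => (lX F)⁻¹ * part4 F z + ((lX F)⁻¹) ^ 2 * part5 F z + part6 F z)
    (by
      intro a b
      simp only [part4, part5, part6, lpart_add, mul_add]
      ring)

/-- The one-dimensional subspace `F·X^{-m}` of `K = F((X))`, as an additive
subgroup. -/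
def Fline (m : ℕ) : AddSubgroup (LaurentSeries F) :=
  (AddMonoidHom.mk' (fun c : F => HahnSeries.C c * ((lX F)⁻¹) ^ m)
    (by intro a b; rw [map_add, add_mul])).range

/-- The additive endomorphism `α(z) := X⁻¹z` of `K`. -/
def alphaK : AddMonoid.End (LaurentSeries F) :=
  AddMonoidHom.mulLeft ((lX F)⁻¹)

variable {F}

/- ============ auxiliary lemmas ============ -/

lemma lXinv : (lX F)⁻¹ = HahnSeries.single (-1 : ℤ) (1 : F) := by
  rw [lX, HahnSeries.inv_single, inv_one]

lemma lXinv_pow (m : ℕ) : ((lX F)⁻¹) ^ m = HahnSeries.single (-(m : ℤ)) (1 : F) := by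
  induction m with
  | zero => simpa using HahnSeries.single_zero_one.symm
  | succ m ih =>
      rw [pow_succ, ih, lXinv, HahnSeries.single_mul_single, mul_one]
      congr 1; push_cast; ring

lemma sXmul_coeff (m : ℤ) (z : LaurentSeries F) (k : ℤ) :
    (HahnSeries.single m (1 : F) * z).coeff k = z.coeff (k - m) := by
  have := HahnSeries.coeff_single_mul_add (r := (1 : F)) (x := z) (a := k - m) (b := m)
  simpa using this

lemma lpart_coeff (P : ℤ → Prop) (z : LaurentSeries F) (k : ℤ) :
    (lpart F P z).coeff k = if P k then z.coeff k else 0 := rfl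

lemma mem_lO (z : LaurentSeries F) : z ∈ lO F ↔ ∀ k < 0, z.coeff k = 0 := Iff.rfl

lemma sum_coeff {ι : Type*} (s : Finset ι) (f : ι → LaurentSeries F) (j : ℤ) :
    (∑ k ∈ s, f k).coeff j = ∑ k ∈ s, (f k).coeff j :=
  map_sum (HahnSeries.coeff.addMonoidHom j) f s

lemma betaK_coeff (z : LaurentSeries F) (k : ℤ) :
    (betaK F z).coeff k =
      (if 0 ≤ k + 1 then z.coeff (k + 1) else 0) +
      ((if k + 2 < 0 ∧ Odd (k + 2) then z.coeff (k + 2) else 0) +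
       (if k < 0 ∧ Even k then z.coeff k else 0)) := by
  show ((lX F)⁻¹ * part4 F z + ((lX F)⁻¹) ^ 2 * part5 F z + part6 F z).coeff k = _
  rw [HahnSeries.coeff_add, HahnSeries.coeff_add, lXinv_pow 2, lXinv, add_assoc]
  congr 1
  · rw [sXmul_coeff]
    rw [show k - (-1) = k + 1 by ring]
    simp only [part4, lpart_coeff]
    congr
  congr 1
  · rw [sXmul_coeff]
    rw [show k - (-(2:ℕ):ℤ) = k + 2 by push_cast; ring]
    simp only [part5, lpart_coeff]
    congr
  · simp only [part6, lpart_coeff]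
    congr

lemma betaK_coeff_nonneg (z : LaurentSeries F) {k : ℤ} (hk : -1 ≤ k) :
    (betaK F z).coeff k = z.coeff (k + 1) := by
  rw [betaK_coeff, if_pos (by omega),
    if_neg (by rintro ⟨h1, _⟩; omega),
    if_neg (by rintro ⟨h1, h2⟩; rw [Int.even_iff] at h2; omega)]
  simp

lemma betaK_coeff_evenneg (z : LaurentSeries F) {k : ℤ} (hk : k < 0) (he : Even k) :
    (betaK F z).coeff k = z.coeff k := by
  have he' := Int.even_iff.mp he
  rw [betaK_coeff, if_neg (by omega),
    if_neg (by rintro ⟨_, h2⟩; rw [Int.odd_iff] at h2; omega),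
    if_pos ⟨hk, he⟩]
  simp

lemma betaK_coeff_oddneg (z : LaurentSeries F) {k : ℤ} (hk : k + 2 < 0) (ho : Odd k) :
    (betaK F z).coeff k = z.coeff (k + 2) := by
  have ho' := Int.odd_iff.mp ho
  rw [betaK_coeff, if_neg (by omega),
    if_pos ⟨hk, by rw [Int.odd_iff]; omega⟩,
    if_neg (by rintro ⟨_, h2⟩; rw [Int.even_iff] at h2; omega)]
  simp

lemma alphaK_pow_apply (n : ℕ) (z : LaurentSeries F) :
    ((alphaK F ^ n : AddMonoid.End _)) z = HahnSeries.single (-(n : ℤ)) (1 : F) * z := by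
  induction n with
  | zero =>
      show z = _
      rw [show (-(0:ℕ) : ℤ) = 0 by ring, HahnSeries.single_zero_one, one_mul]
  | succ n ih =>
      rw [pow_succ']
      show alphaK F ((alphaK F ^ n : AddMonoid.End _) z) = _
      rw [ih]
      show (lX F)⁻¹ * _ = _
      rw [lXinv, ← mul_assoc, HahnSeries.single_mul_single, one_mul]
      congr 2
      push_cast; ring

lemma mem_alpha_map (n : ℕ) (w : LaurentSeries F) :
    w ∈ (lO F).map ((alphaK F) ^ n : AddMonoid.End _) ↔ ∀ k < -(n : ℤ), w.coeff k = 0 := by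
  constructor
  · intro hw
    obtain ⟨z, hz, rfl⟩ := AddSubgroup.mem_map.1 hw
    intro k hk
    erw [alphaK_pow_apply, sXmul_coeff]
    exact hz _ (by omega)
  · intro hw
    refine AddSubgroup.mem_map.2 ⟨HahnSeries.single (n : ℤ) 1 * w, ?_, ?_⟩
    · intro k hk
      rw [sXmul_coeff]
      exact hw _ (by omega)
    · erw [alphaK_pow_apply]
      rw [← mul_assoc, HahnSeries.single_mul_single, one_mul,
        neg_add_cancel, HahnSeries.single_zero_one, one_mul]

lemma Xpow_mul_mem_lO (m : ℕ) (z : LaurentSeries F) (hz : z ∈ lO F) :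
    HahnSeries.single (m : ℤ) (1 : F) * z ∈ lO F := by
  intro k hk
  rw [sXmul_coeff]
  exact hz _ (by omega)

lemma betaK_of_mem_lO (z : LaurentSeries F) (hz : z ∈ lO F) :
    betaK F z = HahnSeries.single (-1 : ℤ) (1 : F) * z := by
  ext k
  rw [sXmul_coeff, show k - (-1) = k + 1 by ring]
  rcases le_or_gt (-1) k with h | h
  · rw [betaK_coeff_nonneg z h]
  · rw [hz _ (by omega), betaK_coeff, if_neg (by omega)]
    rcases Int.even_or_odd k with he | ho
    · have he' := Int.even_iff.mp he
      rw [if_neg (by rintro ⟨_, h2⟩; rw [Int.odd_iff] at h2; omega),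
        if_pos ⟨by omega, he⟩, hz _ (by omega)]
      simp
    · have ho' := Int.odd_iff.mp ho
      rw [if_pos ⟨by omega, by rw [Int.odd_iff]; omega⟩,
        if_neg (by rintro ⟨_, h2⟩; rw [Int.even_iff] at h2; omega),
        hz _ (by omega)]
      simp

lemma beta_pow_X (n : ℕ) : ∀ z : LaurentSeries F, z ∈ lO F →
    ((betaK F) ^ n : AddMonoid.End _) (HahnSeries.single (n : ℤ) 1 * z) = z := by
  induction n with
  | zero =>
      intro z hz
      show HahnSeries.single ((0:ℕ) : ℤ) (1:F) * z = z
      rw [show ((0:ℕ):ℤ) = 0 by ring, HahnSeries.single_zero_one, one_mul]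
  | succ n ih =>
      intro z hz
      rw [pow_succ]
      show ((betaK F) ^ n : AddMonoid.End _)
        (betaK F (HahnSeries.single ((n+1 : ℕ) : ℤ) 1 * z)) = z
      rw [betaK_of_mem_lO _ (Xpow_mul_mem_lO _ _ hz), ← mul_assoc,
        HahnSeries.single_mul_single, one_mul,
        show (-1 + ((n+1 : ℕ) : ℤ)) = (n : ℤ) by push_cast; ring]
      exact ih z hz

lemma lO_le_beta_map (n : ℕ) : lO F ≤ (lO F).map ((betaK F) ^ n : AddMonoid.End _) :=
  fun z hz => AddSubgroup.mem_map.2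
    ⟨HahnSeries.single (n : ℤ) 1 * z, Xpow_mul_mem_lO n z hz, beta_pow_X n z hz⟩

lemma betaK_single_nonneg (a : ℤ) (ha : 0 ≤ a) (c : F) :
    betaK F (HahnSeries.single a c) = HahnSeries.single (a - 1) c := by
  ext k
  rcases le_or_gt (-1) k with h | h
  · rw [betaK_coeff_nonneg _ h, HahnSeries.coeff_single, HahnSeries.coeff_single]
    split_ifs <;> first | rfl | omega
  · rcases Int.even_or_odd k with he | ho
    · have he' := Int.even_iff.mp he
      rw [betaK_coeff_evenneg _ (by omega) he, HahnSeries.coeff_single,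
        HahnSeries.coeff_single]
      split_ifs <;> first | rfl | omega
    · have ho' := Int.odd_iff.mp ho
      rw [betaK_coeff_oddneg _ (by omega) ho, HahnSeries.coeff_single,
        HahnSeries.coeff_single]
      split_ifs <;> first | rfl | omega

lemma betaK_single_oddneg (a : ℤ) (ha : a < 0) (ho : Odd a) (c : F) :
    betaK F (HahnSeries.single a c) = HahnSeries.single (a - 2) c := by
  have ha' := Int.odd_iff.mp ho
  ext k
  rcases le_or_gt (-1) k with h | h
  · rw [betaK_coeff_nonneg _ h, HahnSeries.coeff_single, HahnSeries.coeff_single]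
    split_ifs <;> first | rfl | omega
  · rcases Int.even_or_odd k with he | hok
    · have he' := Int.even_iff.mp he
      rw [betaK_coeff_evenneg _ (by omega) he, HahnSeries.coeff_single,
        HahnSeries.coeff_single]
      split_ifs <;> first | rfl | omega
    · have hok' := Int.odd_iff.mp hok
      rw [betaK_coeff_oddneg _ (by omega) hok, HahnSeries.coeff_single,
        HahnSeries.coeff_single]
      split_ifs <;> first | rfl | omega

lemma beta_pow_single_zero (j : ℕ) (c : F) :
    ((betaK F) ^ (j+1) : AddMonoid.End _) (HahnSeries.single (0 : ℤ) c)
      = HahnSeries.single (-(2*(j:ℤ)+1)) c := by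
  induction j with
  | zero =>
      rw [zero_add, pow_one, betaK_single_nonneg 0 le_rfl]
      norm_num
  | succ j ih =>
      rw [pow_succ']
      show betaK F (((betaK F) ^ (j+1) : AddMonoid.End _) (HahnSeries.single (0:ℤ) c)) = _
      rw [ih, betaK_single_oddneg _ (by omega) ⟨-(j:ℤ)-1, by ring⟩]
      congr 1

lemma beta_pow_single_shift (t : ℕ) (c : F) :
    ((betaK F) ^ t : AddMonoid.End _) (HahnSeries.single (t : ℤ) c)
      = HahnSeries.single (0 : ℤ) c := by
  induction t with
  | zero => rfl
  | succ t ih =>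
      rw [pow_succ]
      show ((betaK F) ^ t : AddMonoid.End _)
        (betaK F (HahnSeries.single ((t+1 : ℕ) : ℤ) c)) = _
      rw [betaK_single_nonneg _ (by positivity),
        show ((t+1:ℕ):ℤ) - 1 = (t:ℤ) by push_cast; ring]
      exact ih

lemma single_mem_beta_map {l k : ℕ} (hk : k ≤ 2*l) (c : F) :
    HahnSeries.single (-(2*(k:ℤ)+1)) c ∈
      (lO F).map ((betaK F) ^ (2*l+1) : AddMonoid.End _) := by
  refine AddSubgroup.mem_map.2 ⟨HahnSeries.single ((2*l - k : ℕ) : ℤ) c, ?_, ?_⟩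
  · intro j hj
    rw [HahnSeries.coeff_single, if_neg (by omega)]
  · rw [show (2*l+1 : ℕ) = (k+1) + (2*l-k) by omega, pow_add]
    show ((betaK F) ^ (k+1) : AddMonoid.End _)
      (((betaK F) ^ (2*l-k) : AddMonoid.End _) (HahnSeries.single ((2*l-k : ℕ) : ℤ) c)) = _
    rw [beta_pow_single_shift, beta_pow_single_zero]

lemma beta_pow_even_zero (n : ℕ) (z : LaurentSeries F) (hz : z ∈ lO F) :
    ∀ k < (0:ℤ), Even k → (((betaK F) ^ n : AddMonoid.End _) z).coeff k = 0 := by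
  induction n with
  | zero => intro k hk _; exact hz k hk
  | succ n ih =>
      intro k hk he
      rw [pow_succ']
      show (betaK F (((betaK F) ^ n : AddMonoid.End _) z)).coeff k = 0
      rw [betaK_coeff_evenneg _ hk he]
      exact ih k hk he

lemma mem_Fline (m : ℕ) (w : LaurentSeries F) :
    w ∈ Fline F m ↔ ∃ c : F, w = HahnSeries.single (-(m : ℤ)) c := by
  constructor
  · rintro ⟨c, rfl⟩
    refine ⟨c, ?_⟩
    show HahnSeries.C c * ((lX F)⁻¹) ^ m = _
    rw [lXinv_pow, HahnSeries.C_apply, HahnSeries.single_mul_single, zero_add, mul_one]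
  · rintro ⟨c, rfl⟩
    refine ⟨c, ?_⟩
    show HahnSeries.C c * ((lX F)⁻¹) ^ m = _
    rw [lXinv_pow, HahnSeries.C_apply, HahnSeries.single_mul_single, zero_add, mul_one]

/-- Auxiliary subgroup: Laurent series whose negative-degree coefficients are
supported on odd degrees `≥ -(2ℓ+1)`. -/
def Tsub (l : ℕ) : AddSubgroup (LaurentSeries F) where
  carrier := {w | ∀ k < (0:ℤ), (Even k ∨ k < -(2*(l:ℤ)+1)) → w.coeff k = 0}
  zero_mem' := by intro k _ _; simp
  add_mem' := by intro a b ha hb k hk h; simp [ha k hk h, hb k hk h]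
  neg_mem' := by intro a ha k hk h; simp [ha k hk h]

lemma mem_R_iff (l : ℕ) (w : LaurentSeries F) :
    w ∈ (⨆ k ∈ Finset.range (l + 1), Fline F (2 * k + 1)) ⊔ lO F ↔
      ∀ k < (0:ℤ), (Even k ∨ k < -(2*(l:ℤ)+1)) → w.coeff k = 0 := by
  constructor
  · intro hw
    have hle : (⨆ k ∈ Finset.range (l + 1), Fline F (2 * k + 1)) ⊔ lO F ≤ Tsub (F := F) l := by
      refine sup_le (iSup_le fun k => iSup_le fun hk => ?_) ?_
      · intro u hu
        obtain ⟨c, rfl⟩ := (mem_Fline _ _).1 hu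
        intro j hj hcase
        rw [HahnSeries.coeff_single]
        have hk' := Finset.mem_range.1 hk
        rcases hcase with he | hlt
        · have he' := Int.even_iff.mp he
          rw [if_neg (by push_cast; omega)]
        · rw [if_neg (by push_cast; omega)]
      · intro u hu j hj _
        exact hu j hj
    exact hle hw
  · intro hw
    have hdec : w = (∑ k ∈ Finset.range (l+1),
        HahnSeries.single (-(2*(k:ℤ)+1)) (w.coeff (-(2*(k:ℤ)+1)))) + part4 F w := by
      ext j
      rw [HahnSeries.coeff_add, sum_coeff]
      by_cases h0 : 0 ≤ j
      · rw [Finset.sum_eq_zero, part4, lpart_coeff, if_pos h0, zero_add]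
        intro k hk
        rw [HahnSeries.coeff_single, if_neg (by omega)]
      · push_neg at h0
        rw [part4, lpart_coeff, if_neg (by omega), add_zero]
        rcases Int.even_or_odd j with he | ho
        · have he' := Int.even_iff.mp he
          rw [hw j h0 (Or.inl he), Finset.sum_eq_zero]
          intro k hk
          rw [HahnSeries.coeff_single, if_neg (by omega)]
        · have ho' := Int.odd_iff.mp ho
          by_cases hbig : j < -(2*(l:ℤ)+1)
          · rw [hw j h0 (Or.inr hbig), Finset.sum_eq_zero]
            intro k hk
            have hk' := Finset.mem_range.1 hk
            rw [HahnSeries.coeff_single, if_neg (by omega)]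
          · push_neg at hbig
            obtain ⟨k₀, hk₀, hjk⟩ : ∃ k₀ : ℕ, k₀ ∈ Finset.range (l+1) ∧ j = -(2*(k₀:ℤ)+1) := by
              refine ⟨(-(j+1)/2).toNat, Finset.mem_range.2 (by omega), by omega⟩
            rw [Finset.sum_eq_single k₀ (fun b _ hb => by
                rw [HahnSeries.coeff_single, if_neg (by
                  intro hEq
                  exact hb (by omega))])
              (fun h => absurd hk₀ h)]
            rw [HahnSeries.coeff_single, if_pos hjk, ← hjk]
    rw [hdec]
    refine AddSubgroup.add_mem _ (AddSubgroup.mem_sup_left ?_) (AddSubgroup.mem_sup_right ?_)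
    · refine AddSubgroup.sum_mem _ fun k hk => ?_
      have : Fline F (2*k+1) ≤ ⨆ k ∈ Finset.range (l + 1), Fline F (2 * k + 1) :=
        le_iSup₂ (f := fun k (_ : k ∈ Finset.range (l+1)) => Fline F (2*k+1)) k hk
      refine this ((mem_Fline _ _).2 ⟨w.coeff (-(2*(k:ℤ)+1)), ?_⟩)
      congr 1
    · intro j hj
      rw [part4, lpart_coeff, if_neg (by omega)]


/-- With `K = F((X))`, `O = F[[X]]`, `q = |F|`, `α(z) := X⁻¹z`
and `β(z) := X⁻¹z⁽⁴⁾ + X⁻²z⁽⁵⁾ + z⁽⁶⁾`: for odd `n = 2ℓ+1`,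
`α^n(O) ∩ β^n(O) = Σ_{k=0}^{ℓ} F·X^{-(2k+1)} + O`, and hence
`[α^n(O) : α^n(O) ∩ β^n(O)] = q^ℓ`. -/
theorem stmt13 (F : Type*) [Field F] [Fintype F] :
    ∀ ℓ : ℕ, ∀ n : ℕ, n = 2 * ℓ + 1 →
      ((lO F).map ((alphaK F) ^ n : AddMonoid.End _) ⊓
          (lO F).map ((betaK F) ^ n : AddMonoid.End _) =
        (⨆ k ∈ Finset.range (ℓ + 1), Fline F (2 * k + 1)) ⊔ lO F) ∧
      AddSubgroup.relIndex ((lO F).map ((betaK F) ^ n : AddMonoid.End _))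
          ((lO F).map ((alphaK F) ^ n : AddMonoid.End _)) =
        (Fintype.card F) ^ ℓ := by
  intro ℓ n hn
  subst hn
  set n := 2 * ℓ + 1 with hn
  set Amap := (lO F).map ((alphaK F) ^ n : AddMonoid.End _) with hA
  set Bmap := (lO F).map ((betaK F) ^ n : AddMonoid.End _) with hB
  set R := (⨆ k ∈ Finset.range (ℓ + 1), Fline F (2 * k + 1)) ⊔ lO F with hR
  have hRA : R ≤ Amap := by
    rw [hR]
    refine sup_le (iSup_le fun k => iSup_le fun hk => ?_) ?_
    · intro u hu
      obtain ⟨c, rfl⟩ := (mem_Fline _ _).1 hu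
      have hk' := Finset.mem_range.1 hk
      rw [hA, mem_alpha_map]
      intro j hj
      rw [HahnSeries.coeff_single, if_neg (by push_cast at hj ⊢; omega)]
    · intro u hu
      rw [hA, mem_alpha_map]
      intro j hj
      exact hu j (by omega)
  have hRB : R ≤ Bmap := by
    rw [hR]
    refine sup_le (iSup_le fun k => iSup_le fun hk => ?_) (lO_le_beta_map n)
    · intro u hu
      obtain ⟨c, rfl⟩ := (mem_Fline _ _).1 hu
      have hk' := Finset.mem_range.1 hk
      have := single_mem_beta_map (l := ℓ) (k := k) (by omega) c
      rw [hB]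
      convert this using 2
      simp
  have hmain : Amap ⊓ Bmap = R := by
    refine le_antisymm ?_ (le_inf hRA hRB)
    intro w hw
    rw [AddSubgroup.mem_inf] at hw
    obtain ⟨hwa, hwb⟩ := hw
    rw [hR, mem_R_iff]
    intro k hk hcase
    rcases hcase with he | hlt
    · obtain ⟨z, hz, rfl⟩ := AddSubgroup.mem_map.1 hwb
      exact beta_pow_even_zero n z hz k hk he
    · exact (mem_alpha_map n w).1 hwa k (by push_cast; omega)
  refine ⟨hmain, ?_⟩
  -- index computation
  let φ : LaurentSeries F →+ (Fin ℓ → F) :=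
    AddMonoidHom.mk' (fun w i => w.coeff (-(2*((i:ℕ):ℤ)+2)))
      (by intro a b; funext i; exact HahnSeries.coeff_add)
  have hker : R ⊓ Amap = φ.ker ⊓ Amap := by
    ext w
    simp only [AddSubgroup.mem_inf]
    constructor
    · rintro ⟨hwR, hwA⟩
      refine ⟨?_, hwA⟩
      rw [AddMonoidHom.mem_ker]
      funext i
      show w.coeff (-(2*((i:ℕ):ℤ)+2)) = 0
      rw [hR, mem_R_iff] at hwR
      exact hwR _ (by omega) (Or.inl ⟨-((i:ℕ):ℤ)-1, by ring⟩)
    · rintro ⟨hk, hwA⟩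
      refine ⟨?_, hwA⟩
      rw [hR, mem_R_iff]
      intro k hk0 hcase
      rcases hcase with he | hlt
      · obtain ⟨m, rfl⟩ := he
        by_cases hge : -(2*(ℓ:ℤ)) ≤ m + m
        · have hi : (-m-1).toNat < ℓ := by omega
          have := congrFun (AddMonoidHom.mem_ker.1 hk) ⟨(-m-1).toNat, hi⟩
          have hidx : m + m = -(2*(((-m-1).toNat : ℕ):ℤ)+2) := by omega
          rw [hidx]
          exact this
        · exact (mem_alpha_map n w).1 hwA _ (by push_cast; omega)
      · exact (mem_alpha_map n w).1 hwA _ (by push_cast; omega)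
  have hsurj : Amap.map φ = ⊤ := by
    rw [eq_top_iff]
    intro v _
    refine AddSubgroup.mem_map.2
      ⟨∑ i : Fin ℓ, HahnSeries.single (-(2*((i:ℕ):ℤ)+2)) (v i), ?_, ?_⟩
    · rw [hA, mem_alpha_map]
      intro k hk
      rw [sum_coeff]
      refine Finset.sum_eq_zero fun i _ => ?_
      have hi := i.isLt
      rw [HahnSeries.coeff_single, if_neg (by push_cast at hk ⊢; omega)]
    · funext i
      show (∑ j : Fin ℓ, HahnSeries.single (-(2*((j:ℕ):ℤ)+2)) (v j)).coeff
        (-(2*((i:ℕ):ℤ)+2)) = v i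
      rw [sum_coeff, Finset.sum_eq_single i
        (fun b _ hb => by
          rw [HahnSeries.coeff_single, if_neg (by
            intro hEq
            exact hb (Fin.ext (by omega)))])
        (by simp)]
      rw [HahnSeries.coeff_single, if_pos rfl]
  calc AddSubgroup.relIndex Bmap Amap
      = AddSubgroup.relIndex (Bmap ⊓ Amap) Amap := (AddSubgroup.inf_relIndex_right _ _).symm
    _ = AddSubgroup.relIndex (φ.ker ⊓ Amap) Amap := by
        rw [inf_comm Bmap Amap, hmain, ← AddSubgroup.inf_relIndex_right R Amap, hker,
          AddSubgroup.inf_relIndex_right]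
    _ = AddSubgroup.relIndex φ.ker Amap := AddSubgroup.inf_relIndex_right _ _
    _ = Nat.card (Amap.map φ) := AddSubgroup.relIndex_ker _ _
    _ = Fintype.card F ^ ℓ := by
        rw [hsurj]
        rw [Nat.card_congr AddSubgroup.topEquiv.toEquiv]
        simp [Nat.card_eq_fintype_card]

end
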